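/- Take two disjoint cycles in a permutation, one containing elements u1 and w1 (with u1 mapping to w1) and the other containing u2 and w2 (with u2 mapping to w2). Replacing the maps u1 ↦ w1 and u2 ↦ w2 by u1 ↦ w2 and u2 ↦ w1 merges the two cycles into a single cycle, and the parity of the number of even-length cycles changes by exactly one: if both original cycle lengths had the same parity the even-cycle count changes by ±1, and if they had different parity it decreases by 1; in all cases (-1)^{ec} flips sign. -/
import Mathlib


/-- The number of even-length cycles of a permutation. -/
def evenCycles {α : Type*} [Fintype α] [DecidableEq α] (π : Equiv.Perm α) : ℕ :=
  (π.cycleType.filter fun l => Even l).card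

lemma filter_even_card_pow (s : Multiset ℕ) :
    (-1 : ℤ) ^ (s.filter fun l => Even l).card = (-1 : ℤ) ^ (s.sum + s.card) := by
  induction s using Multiset.induction with
  | empty => simp
  | cons a s ih =>
      have hsplit : a + s.sum + (s.card + 1) = (s.sum + s.card) + (a + 1) := by ring
      simp only [Multiset.card_cons, Multiset.sum_cons]
      by_cases ha : Even a
      · rw [Multiset.filter_cons_of_pos _ (by simpa using ha), Multiset.card_cons,
          pow_succ, ih, hsplit, pow_add (-1 : ℤ) (s.sum + Multiset.card s) (a + 1),
          (by simpa using ha.add_one : Odd (a + 1)).neg_one_pow]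
      · rw [Multiset.filter_cons_of_neg _ (by simpa using ha), ih, hsplit,
          pow_add (-1 : ℤ) (s.sum + Multiset.card s) (a + 1),
          ((Nat.not_even_iff_odd.mp ha).add_one).neg_one_pow, mul_one]

lemma neg_one_pow_evenCycles {α : Type*} [Fintype α] [DecidableEq α] (π : Equiv.Perm α) :
    (-1 : ℤ) ^ evenCycles π = (Equiv.Perm.sign π : ℤ) := by
  rw [evenCycles, filter_even_card_pow, Equiv.Perm.sign_of_cycleType]
  push_cast
  rfl

theorem merge_cycles_flips_even_cycle_sign {α : Type*} [Fintype α] [DecidableEq α]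
    (π : Equiv.Perm α) (u1 u2 w1 w2 : α)
    (h1 : π u1 = w1) (h2 : π u2 = w2) (hdiff : ¬ π.SameCycle u1 u2) :
    (Equiv.swap w1 w2 * π).SameCycle u1 u2 ∧
      (-1 : ℤ) ^ evenCycles (Equiv.swap w1 w2 * π) = -(-1 : ℤ) ^ evenCycles π := by
  have hne : w1 ≠ w2 := by
    intro h
    apply hdiff
    have : u1 = u2 := π.injective (by rw [h1, h2, h])
    rw [this]
  constructor
  · set π' := Equiv.swap w1 w2 * π with hπ'
    have hnu1 : ∀ i : ℕ, (π ^ i) w2 ≠ u1 := by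
      intro i hi
      refine hdiff (Equiv.Perm.SameCycle.symm ⟨(i : ℤ) + 1, ?_⟩)
      rw [zpow_add_one, Equiv.Perm.mul_apply, zpow_natCast]
      simp [h2, hi]
    have hsc : π.SameCycle w2 u2 := Equiv.Perm.SameCycle.symm ⟨1, by simp [h2]⟩
    obtain ⟨k, -, hk⟩ := hsc.exists_pow_eq'
    have hex : ∃ k : ℕ, (π ^ k) w2 = u2 := ⟨k, hk⟩
    classical
    have hmspec : (π ^ Nat.find hex) w2 = u2 := Nat.find_spec hex
    have hmin : ∀ i < Nat.find hex, (π ^ i) w2 ≠ u2 := fun i hi => Nat.find_min hex hi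
    have key : ∀ i ≤ Nat.find hex, (π' ^ i) w2 = (π ^ i) w2 := by
      intro i hi
      induction i with
      | zero => simp
      | succ n ihn =>
          have hn : n < Nat.find hex := hi
          rw [pow_succ', pow_succ']
          simp only [hπ', Equiv.Perm.mul_apply]
          rw [ihn (Nat.le_of_lt hn)]
          have hx1 : π ((π ^ n) w2) ≠ w1 := fun h =>
            hnu1 n (π.injective (by rw [h, h1]))
          have hx2 : π ((π ^ n) w2) ≠ w2 := fun h =>
            hmin n hn (π.injective (by rw [h, h2]))
          rw [Equiv.swap_apply_of_ne_of_ne hx1 hx2]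
    have hu1 : π' u1 = w2 := by
      rw [hπ', Equiv.Perm.mul_apply, h1, Equiv.swap_apply_left]
    refine ⟨(Nat.find hex : ℤ) + 1, ?_⟩
    rw [zpow_add_one, Equiv.Perm.mul_apply, hu1, zpow_natCast, key _ le_rfl, hmspec]
  · rw [neg_one_pow_evenCycles, neg_one_pow_evenCycles, map_mul,
      Equiv.Perm.sign_swap hne]
    push_cast
    ring
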